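/- Let μ be a probability measure on ℝ^d, let f, g : ℝ^d → ℝ^k be measurable with ‖f(x) - g(x)‖ ≤ C·2^{-m} for all x. Then |H(f μ, 𝒟_m) - H(g μ, 𝒟_m)| ≤ C' where C' depends only on C and k. -/

import Mathlib

open MeasureTheory ENNReal

/-- Entropy of a measure on `ℝ^k` with respect to the partition into dyadic cubes of
side `2^{-m}`. -/
noncomputable def cubeEntropy {k : ℕ} (θ : Measure (Fin k → ℝ)) (m : ℕ) : ℝ≥0∞ :=
  ∑' a : Fin k → ℤ, ENNReal.ofReal (Real.negMulLog
    (θ {x | ∀ j, x j ∈ Set.Ico ((a j : ℝ) * 2 ^ (-(m : ℤ)))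
      (((a j : ℝ) + 1) * 2 ^ (-(m : ℤ)))}).toReal)

namespace CubeAux

variable {k : ℕ}

def cube (m : ℕ) (a : Fin k → ℤ) : Set (Fin k → ℝ) :=
  {x | ∀ j, x j ∈ Set.Ico ((a j : ℝ) * 2 ^ (-(m : ℤ)))
      (((a j : ℝ) + 1) * 2 ^ (-(m : ℤ)))}

lemma cubeEntropy_eq (θ : Measure (Fin k → ℝ)) (m : ℕ) :
    cubeEntropy θ m
      = ∑' a : Fin k → ℤ, ENNReal.ofReal (Real.negMulLog (θ (cube m a)).toReal) := rfl

noncomputable def idx (m : ℕ) (y : Fin k → ℝ) : Fin k → ℤ := fun j => ⌊y j * 2 ^ (m : ℤ)⌋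

lemma mem_cube_iff {m : ℕ} {a : Fin k → ℤ} {y : Fin k → ℝ} :
    y ∈ cube m a ↔ idx m y = a := by
  have h2 : (0:ℝ) < 2 ^ (m:ℤ) := by positivity
  simp only [cube, Set.mem_setOf_eq, idx, funext_iff, Set.mem_Ico]
  refine forall_congr' fun j => ?_
  have hrw : ∀ c : ℝ, c * (2:ℝ) ^ (-(m:ℤ)) = c / 2 ^ (m:ℤ) := by
    intro c; rw [zpow_neg]; ring
  rw [hrw, hrw, div_le_iff₀ h2, lt_div_iff₀ h2, Int.floor_eq_iff]

lemma cube_measurable {m : ℕ} {a : Fin k → ℤ} : MeasurableSet (cube m a) := by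
  have : cube m a = Set.pi Set.univ (fun j => Set.Ico ((a j : ℝ) * 2 ^ (-(m : ℤ)))
      (((a j : ℝ) + 1) * 2 ^ (-(m : ℤ)))) := by
    ext x; simp [cube, Set.mem_pi]
  rw [this]
  exact MeasurableSet.univ_pi fun j => measurableSet_Ico

lemma cube_disjoint {m : ℕ} {a b : Fin k → ℤ} (hab : a ≠ b) :
    Disjoint (cube m a) (cube m b) := by
  rw [Set.disjoint_left]
  intro y hy hy'
  rw [mem_cube_iff] at hy hy'
  exact hab (hy ▸ hy')

lemma tsum_measure_inter {d : ℕ} (μ : Measure (Fin d → ℝ)) {T : Set (Fin d → ℝ)}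
    (hT : MeasurableSet T) {h : (Fin d → ℝ) → (Fin k → ℝ)} (hh : Measurable h) (m : ℕ) :
    ∑' b : Fin k → ℤ, μ (T ∩ h ⁻¹' cube m b) = μ T := by
  rw [← measure_iUnion]
  · congr 1
    ext x
    simp only [Set.mem_iUnion, Set.mem_inter_iff, Set.mem_preimage]
    constructor
    · rintro ⟨b, hx, -⟩; exact hx
    · intro hx; exact ⟨idx m (h x), hx, mem_cube_iff.mpr rfl⟩
  · intro a b hab
    exact (Set.disjoint_left.mpr fun x hx hx' =>
      Set.disjoint_left.mp (cube_disjoint hab) hx.2 hx'.2)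
  · exact fun b => hT.inter (hh cube_measurable)

lemma sum_negMulLog_le {ι : Type*} (S : Finset ι) (x : ι → ℝ) (hx : ∀ i ∈ S, 0 ≤ x i) :
    ∑ i ∈ S, Real.negMulLog (x i) ≤
      Real.negMulLog (∑ i ∈ S, x i) + (∑ i ∈ S, x i) * Real.log S.card := by
  rcases S.eq_empty_or_nonempty with rfl | hS
  · simp
  set s := ∑ i ∈ S, x i with hs
  have hs0 : 0 ≤ s := Finset.sum_nonneg hx
  rcases eq_or_lt_of_le hs0 with hs0' | hs0'
  · have hall : ∀ i ∈ S, x i = 0 :=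
      (Finset.sum_eq_zero_iff_of_nonneg hx).mp hs0'.symm
    have : ∑ i ∈ S, Real.negMulLog (x i) = 0 := by
      refine Finset.sum_eq_zero fun i hi => ?_
      rw [hall i hi, Real.negMulLog_zero]
    rw [this, ← hs0', Real.negMulLog_zero]
    simp
  have hn : (0:ℝ) < S.card := by exact_mod_cast Finset.card_pos.mpr hS
  set n := (S.card : ℝ)
  have key : ∀ i ∈ S, Real.negMulLog (x i)
      ≤ s / n - x i - x i * Real.log s + x i * Real.log n := by
    intro i hi
    rcases eq_or_lt_of_le (hx i hi) with h0 | h0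
    · rw [← h0, Real.negMulLog_zero]
      have : 0 ≤ s / n := by positivity
      simpa using this
    · have hlog : Real.log (s / (n * x i)) ≤ s / (n * x i) - 1 :=
        Real.log_le_sub_one_of_pos (by positivity)
      have hlogeq : Real.log (s / (n * x i)) = Real.log s - Real.log n - Real.log (x i) := by
        rw [Real.log_div (ne_of_gt hs0') (by positivity), Real.log_mul (ne_of_gt hn) (ne_of_gt h0)]
        ring
      rw [hlogeq] at hlog
      have h2 : x i * (Real.log s - Real.log n - Real.log (x i)) ≤ x i * (s / (n * x i) - 1) :=
        mul_le_mul_of_nonneg_left hlog (le_of_lt h0)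
      have h3 : x i * (s / (n * x i) - 1) = s / n - x i := by
        field_simp
      rw [h3] at h2
      simp only [Real.negMulLog, neg_mul]
      nlinarith [h2]
  calc ∑ i ∈ S, Real.negMulLog (x i)
      ≤ ∑ i ∈ S, (s / n - x i - x i * Real.log s + x i * Real.log n) :=
        Finset.sum_le_sum key
    _ = S.card * (s / n) - s - s * Real.log s + s * Real.log n := by
        rw [Finset.sum_add_distrib, Finset.sum_sub_distrib, Finset.sum_sub_distrib,
          Finset.sum_const, ← Finset.sum_mul, ← Finset.sum_mul]
        ring
    _ = Real.negMulLog s + s * Real.log n := by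
        have : (S.card : ℝ) * (s / n) = s := by
          field_simp
          rfl
        rw [this, Real.negMulLog]
        ring

lemma oneside (C : ℝ) {d : ℕ} (μ : Measure (Fin d → ℝ)) [IsProbabilityMeasure μ]
    (f g : (Fin d → ℝ) → (Fin k → ℝ)) (hf : Measurable f) (hg : Measurable g)
    (m : ℕ) (hfg : ∀ x, ‖f x - g x‖ ≤ C * 2 ^ (-(m : ℤ))) :
    cubeEntropy (μ.map f) m ≤ cubeEntropy (μ.map g) m
      + ENNReal.ofReal (Real.log (((2 * (⌈C⌉₊ + 1) + 1) ^ k : ℕ))) := by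
  set L : ℕ := ⌈C⌉₊ + 1 with hL
  set N : ℕ := (2 * L + 1) ^ k with hN
  set ε : ℝ := 2 ^ (-(m : ℤ)) with hε
  have hεpos : (0:ℝ) < ε := by positivity
  set A : (Fin k → ℤ) → Set (Fin d → ℝ) := fun a => f ⁻¹' cube m a with hA
  set B : (Fin k → ℤ) → Set (Fin d → ℝ) := fun b => g ⁻¹' cube m b with hB
  set R : (Fin k → ℤ) → (Fin k → ℤ) → ℝ≥0∞ := fun a b => μ (A a ∩ B b) with hR
  have hRa : ∀ a, ∑' b, R a b = μ (A a) :=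
    fun a => tsum_measure_inter μ (hf cube_measurable) hg m
  have hRb : ∀ b, ∑' a, R a b = μ (B b) := by
    intro b
    have : ∀ a, R a b = μ (B b ∩ A a) := fun a => by rw [hR, Set.inter_comm]
    simp_rw [this]
    exact tsum_measure_inter μ (hg cube_measurable) hf m
  have hle1 : ∀ s : Set (Fin d → ℝ), (μ s).toReal ≤ 1 := fun s => by
    simpa using ENNReal.toReal_mono (by simp) (prob_le_one (μ := μ) (s := s))
  -- support of R
  have hsupp : ∀ a b : Fin k → ℤ, R a b ≠ 0 → ∀ j, a j ∈ Finset.Icc (b j - (L:ℤ)) (b j + L) := by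
    intro a b hne j
    obtain ⟨x, hxa, hxb⟩ := nonempty_of_measure_ne_zero hne
    have hfa := hxa j
    have hgb := hxb j
    simp only [cube, Set.mem_setOf_eq, Set.mem_Ico] at hfa hgb
    have habs : |f x j - g x j| ≤ C * ε := by
      have h1 : ‖(f x - g x) j‖ ≤ ‖f x - g x‖ := norm_le_pi_norm (f x - g x) j
      simp only [Pi.sub_apply, Real.norm_eq_abs] at h1
      exact h1.trans (hfg x)
    obtain ⟨habs1, habs2⟩ := abs_le.mp habs
    have hC : C ≤ (⌈C⌉₊ : ℝ) := Nat.le_ceil C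
    have hr1 : ((a j : ℝ) - b j) < L := by
      have h5 : ((a j : ℝ) - b j - 1) * ε < C * ε := by nlinarith [hfa.1, hgb.2]
      have h6 : ((a j : ℝ) - b j - 1) < C := (mul_lt_mul_iff_of_pos_right hεpos).mp h5
      push_cast [hL]
      linarith
    have hr2 : ((b j : ℝ) - a j) < L := by
      have h5 : ((b j : ℝ) - a j - 1) * ε < C * ε := by nlinarith [hgb.1, hfa.2]
      have h6 : ((b j : ℝ) - a j - 1) < C := (mul_lt_mul_iff_of_pos_right hεpos).mp h5
      push_cast [hL]
      linarith
    have hi1 : a j - b j < (L:ℤ) := by exact_mod_cast hr1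
    have hi2 : b j - a j < (L:ℤ) := by exact_mod_cast hr2
    rw [Finset.mem_Icc]
    omega
  set S : (Fin k → ℤ) → Finset (Fin k → ℤ) :=
    fun b => Fintype.piFinset (fun j => Finset.Icc (b j - (L:ℤ)) (b j + L)) with hS
  have hcard : ∀ b, (S b).card = N := by
    intro b
    have h1 : ∀ j, (Finset.Icc (b j - (L:ℤ)) (b j + L)).card = 2 * L + 1 := by
      intro j; rw [Int.card_Icc]; omega
    rw [hS, Fintype.card_piFinset]
    simp [h1, hN]
  -- step 1 : entropy of marginal ≤ entropy of joint, pointwise in a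
  have step1 : ∀ a, ENNReal.ofReal (Real.negMulLog (μ (A a)).toReal)
      ≤ ∑' b, ENNReal.ofReal (Real.negMulLog (R a b).toReal) := by
    intro a
    set p : ℝ := (μ (A a)).toReal with hp
    set r : (Fin k → ℤ) → ℝ := fun b => (R a b).toReal with hr
    have hrs : Summable r := by
      apply ENNReal.summable_toReal
      rw [hRa a]; exact measure_ne_top μ _
    have hpr : p = ∑' b, r b := by
      rw [hp, ← hRa a, ENNReal.tsum_toReal_eq (fun _ => measure_ne_top μ _)]
    have hp1 : p ≤ 1 := hle1 _
    have hlogp : 0 ≤ -Real.log p := by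
      rw [neg_nonneg]; exact Real.log_nonpos ENNReal.toReal_nonneg hp1
    have hsum_eq : ∑' b, r b * (-Real.log p) = Real.negMulLog p := by
      rw [tsum_mul_right, ← hpr, Real.negMulLog]
      ring
    have hterm : ∀ b, r b * (-Real.log p) ≤ Real.negMulLog (r b) := by
      intro b
      rcases eq_or_lt_of_le (show (0:ℝ) ≤ r b from ENNReal.toReal_nonneg) with h0 | h0
      · rw [← h0]
        simp
      · have hrp : r b ≤ p := by
          rw [hpr]
          exact Summable.le_tsum hrs b fun _ _ => ENNReal.toReal_nonneg
        have hll : Real.log (r b) ≤ Real.log p := Real.log_le_log h0 hrp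
        have h2 : r b * -Real.log p ≤ r b * -Real.log (r b) :=
          mul_le_mul_of_nonneg_left (neg_le_neg hll) (le_of_lt h0)
        have h3 : Real.negMulLog (r b) = -(r b * Real.log (r b)) := by
          rw [Real.negMulLog]; ring
        linarith [h2, h3.ge, h3.le]
    calc ENNReal.ofReal (Real.negMulLog p)
        = ∑' b, ENNReal.ofReal (r b * (-Real.log p)) := by
          rw [← hsum_eq, ENNReal.ofReal_tsum_of_nonneg
            (fun b => mul_nonneg ENNReal.toReal_nonneg hlogp) (hrs.mul_right _)]
      _ ≤ ∑' b, ENNReal.ofReal (Real.negMulLog (r b)) :=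
          ENNReal.tsum_le_tsum fun b => ENNReal.ofReal_le_ofReal (hterm b)
  -- step 3 : conditional entropy bound, pointwise in b
  have hNlog : 0 ≤ Real.log N := by
    have h1 : (1:ℕ) ≤ N := Nat.one_le_iff_ne_zero.mpr (by positivity)
    exact Real.log_nonneg (by exact_mod_cast h1)
  have step3 : ∀ b, ∑' a, ENNReal.ofReal (Real.negMulLog (R a b).toReal)
      ≤ ENNReal.ofReal (Real.negMulLog (μ (B b)).toReal)
        + μ (B b) * ENNReal.ofReal (Real.log N) := by
    intro b
    have hzero : ∀ a ∉ S b, ENNReal.ofReal (Real.negMulLog (R a b).toReal) = 0 := by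
      intro a ha
      have : R a b = 0 := by
        by_contra hne
        exact ha (Fintype.mem_piFinset.mpr (hsupp a b hne))
      simp [this]
    have hzero' : ∀ a ∉ S b, (R a b).toReal = 0 := by
      intro a ha
      have : R a b = 0 := by
        by_contra hne
        exact ha (Fintype.mem_piFinset.mpr (hsupp a b hne))
      simp [this]
    have hq : (μ (B b)).toReal = ∑ a ∈ S b, (R a b).toReal := by
      rw [← hRb b, ENNReal.tsum_toReal_eq (fun _ => measure_ne_top μ _), tsum_eq_sum hzero']
    have hnn : ∀ a ∈ S b, 0 ≤ Real.negMulLog (R a b).toReal :=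
      fun a _ => Real.negMulLog_nonneg ENNReal.toReal_nonneg (hle1 _)
    calc ∑' a, ENNReal.ofReal (Real.negMulLog (R a b).toReal)
        = ∑ a ∈ S b, ENNReal.ofReal (Real.negMulLog (R a b).toReal) := tsum_eq_sum hzero
      _ = ENNReal.ofReal (∑ a ∈ S b, Real.negMulLog (R a b).toReal) :=
          (ENNReal.ofReal_sum_of_nonneg hnn).symm
      _ ≤ ENNReal.ofReal (Real.negMulLog (μ (B b)).toReal
            + (μ (B b)).toReal * Real.log N) := by
          apply ENNReal.ofReal_le_ofReal
          have := sum_negMulLog_le (S b) (fun a => (R a b).toReal)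
            (fun a _ => ENNReal.toReal_nonneg)
          rw [← hq, hcard b] at this
          exact this
      _ ≤ ENNReal.ofReal (Real.negMulLog (μ (B b)).toReal)
            + μ (B b) * ENNReal.ofReal (Real.log N) := by
          rw [ENNReal.ofReal_add (Real.negMulLog_nonneg ENNReal.toReal_nonneg (hle1 _))
            (mul_nonneg ENNReal.toReal_nonneg hNlog),
            ENNReal.ofReal_mul ENNReal.toReal_nonneg, ENNReal.ofReal_toReal (measure_ne_top μ _)]
  -- put everything together
  have htot : ∑' b, μ (B b) = 1 := by
    have := tsum_measure_inter μ (MeasurableSet.univ) hg m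
    simp only [Set.univ_inter] at this
    rw [hB]
    simp only [this]
    exact measure_univ
  have hmapf : ∀ a, (μ.map f) (cube m a) = μ (A a) :=
    fun a => Measure.map_apply hf cube_measurable
  have hmapg : ∀ b, (μ.map g) (cube m b) = μ (B b) :=
    fun b => Measure.map_apply hg cube_measurable
  calc cubeEntropy (μ.map f) m
      = ∑' a, ENNReal.ofReal (Real.negMulLog (μ (A a)).toReal) := by
        rw [cubeEntropy_eq]
        exact tsum_congr fun a => by rw [hmapf a]
    _ ≤ ∑' a, ∑' b, ENNReal.ofReal (Real.negMulLog (R a b).toReal) :=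
        ENNReal.tsum_le_tsum step1
    _ = ∑' b, ∑' a, ENNReal.ofReal (Real.negMulLog (R a b).toReal) := ENNReal.tsum_comm
    _ ≤ ∑' b, (ENNReal.ofReal (Real.negMulLog (μ (B b)).toReal)
          + μ (B b) * ENNReal.ofReal (Real.log N)) := ENNReal.tsum_le_tsum step3
    _ = (∑' b, ENNReal.ofReal (Real.negMulLog (μ (B b)).toReal))
          + (∑' b, μ (B b)) * ENNReal.ofReal (Real.log N) := by
        rw [ENNReal.tsum_add, ENNReal.tsum_mul_right]
    _ = cubeEntropy (μ.map g) m + ENNReal.ofReal (Real.log N) := by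
        rw [htot, one_mul, cubeEntropy_eq]
        congr 1
        exact (tsum_congr fun b => by rw [hmapg b]).symm

end CubeAux

/-- If `f, g : ℝ^d → ℝ^k` satisfy `‖f(x) - g(x)‖ ≤ C 2^{-m}` for all `x`, then the
pushforwards of any probability measure `μ` satisfy
`|H(fμ, 𝒟_m) - H(gμ, 𝒟_m)| ≤ C'` with `C'` depending only on `C` and `k`. -/
theorem cubeEntropy_map_close (C : ℝ) (k : ℕ) :
    ∃ C' : ℝ, ∀ (d : ℕ) (μ : Measure (Fin d → ℝ)), IsProbabilityMeasure μ →
      ∀ (f g : (Fin d → ℝ) → (Fin k → ℝ)), Measurable f → Measurable g →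
      ∀ m : ℕ, (∀ x, ‖f x - g x‖ ≤ C * 2 ^ (-(m : ℤ))) →
        cubeEntropy (μ.map f) m ≤ cubeEntropy (μ.map g) m + ENNReal.ofReal C' ∧
        cubeEntropy (μ.map g) m ≤ cubeEntropy (μ.map f) m + ENNReal.ofReal C' := by
  refine ⟨Real.log (((2 * (⌈C⌉₊ + 1) + 1) ^ k : ℕ)), ?_⟩
  intro d μ hμ f g hf hg m hfg
  exact ⟨CubeAux.oneside C μ f g hf hg m hfg,
    CubeAux.oneside C μ g f hg hf m fun x => by rw [norm_sub_rev]; exact hfg x⟩
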